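/- arXiv:1911.08702 — 5 statements merged into one kernel-verified Lean document; each statement's English description precedes it below -/
import Mathlib

section
/- With δ and δ* defined as above on partitions of n with distinct parts, δ* ∘ δ* = 0. -/
/-- A partition of `n` with distinct parts: a strictly decreasing list of positive
integers summing to `n`. -/
def IsDistinctPartition (n : ℕ) (σ : List ℕ) : Prop :=
  σ.Pairwise (· > ·) ∧ (∀ x ∈ σ, 0 < x) ∧ σ.sum = n

/-- `mval σ` is `m(σ)`: the maximal `m` such that `n_j = n_{j-1} - 1` for all
`2 ≤ j ≤ m`. -/
def mval : List ℕ → ℕ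
  | [] => 0
  | [_] => 1
  | a :: b :: t => if b = a - 1 then mval (b :: t) + 1 else 1

/-- The coboundary map `δ`: if `m(σ) < ℓ` then `δσ = 0` when `m(σ) ≥ n_ℓ`, and
`δσ = (n_1-1, …, n_{m(σ)}-1, n_{m(σ)+1}, …, n_ℓ, m(σ))` when `m(σ) < n_ℓ`;
if `m(σ) = ℓ` then `δσ = 0` when `m(σ) ≥ n_ℓ - 1` and
`δσ = (n_1-1, …, n_ℓ-1, m(σ))` when `m(σ) < n_ℓ - 1`.  The zero vector is
represented by `none`. -/
def deltaS (σ : List ℕ) : Option (List ℕ) :=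
  if σ = [] then none
  else
    let m := mval σ
    if (m < σ.length ∧ m < σ.getLast! ) ∨ (m = σ.length ∧ m < σ.getLast! - 1) then
      some ((σ.take m).map (· - 1) ++ σ.drop m ++ [m])
    else none

/-- The adjoint map `δ*`: when (`m(σ) < ℓ` and `m(σ) ≥ n_ℓ`) or (`m(σ) = ℓ` and
`m(σ) > n_ℓ`), `δ*σ = (n_1+1, …, n_{n_ℓ}+1, n_{n_ℓ+1}, …, n_{ℓ-1})` (add 1 to the
first `n_ℓ` parts and delete the last part); otherwise `δ*σ = 0` (`none`). -/
def deltaStarS (σ : List ℕ) : Option (List ℕ) :=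
  if σ = [] then none
  else
    let m := mval σ
    let nl := σ.getLast!
    if (m < σ.length ∧ nl ≤ m) ∨ (m = σ.length ∧ nl < m) then
      some ((σ.dropLast.take nl).map (· + 1) ++ σ.dropLast.drop nl)
    else none


private lemma mval_le (l : List ℕ) : mval l ≤ l.length := by
  induction l with
  | nil => simp [mval]
  | cons a t ih =>
    cases t with
    | nil => simp [mval]
    | cons b t' =>
      rw [mval]
      split
      · simp only [List.length_cons] at *; omega
      · simp only [List.length_cons]; omega

private lemma mval_consec (l : List ℕ) (i : ℕ) (h : i + 1 < mval l) :
    l[i+1]! = l[i]! - 1 := by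
  induction l generalizing i with
  | nil => simp [mval] at h
  | cons a t ih =>
    cases t with
    | nil => simp [mval] at h
    | cons b t' =>
      rw [mval] at h
      split at h
      · rename_i hb
        cases i with
        | zero =>
          simpa [List.getElem!_cons_succ, List.getElem!_cons_zero] using hb
        | succ j =>
          simpa [List.getElem!_cons_succ] using ih j (by omega)
      · omega

private lemma mval_spec (l : List ℕ) (k : ℕ) (h1 : 1 ≤ k) (h2 : k ≤ l.length)
    (hc : ∀ i, i + 1 < k → l[i+1]! = l[i]! - 1)
    (hb : k < l.length → ¬ l[k]! = l[k-1]! - 1) : mval l = k := by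
  induction l generalizing k with
  | nil => simp at h2; omega
  | cons a t ih =>
    cases t with
    | nil =>
      simp only [List.length_cons, List.length_nil] at h2
      have : k = 1 := by omega
      subst this
      simp [mval]
    | cons b t' =>
      rw [mval]
      obtain ⟨j, rfl⟩ : ∃ j, k = j + 1 := ⟨k - 1, by omega⟩
      cases j with
      | zero =>
        have hbne := hb (by simp only [List.length_cons]; omega)
        have hbne' : ¬ b = a - 1 := by simpa using hbne
        rw [if_neg hbne']
      | succ j =>
        have hb0 : b = a - 1 := by
          simpa using hc 0 (by omega)
        rw [if_pos hb0]
        have hrec : mval (b :: t') = j + 1 := by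
          apply ih (j + 1) (by omega)
          · simp only [List.length_cons] at h2 ⊢; omega
          · intro i hi
            simpa [List.getElem!_cons_succ] using hc (i + 1) (by omega)
          · intro hlt
            have h' := hb (by simp only [List.length_cons] at hlt ⊢; omega)
            simp only [List.getElem!_cons_succ] at h'
            simpa using h'
        omega

/-- `δ* ∘ δ* = 0` on partitions of `n` with distinct parts. -/
theorem deltaStarS_sq_zero (n : ℕ) (σ : List ℕ) (hσ : IsDistinctPartition n σ) :
    ∀ τ, deltaStarS σ = some τ → deltaStarS τ = none := by
  obtain ⟨hsort, hpos, -⟩ := hσ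
  intro τ hτ
  by_cases hne : σ = []
  · rw [deltaStarS, if_pos hne] at hτ; exact absurd hτ (by simp)
  simp only [deltaStarS, if_neg hne] at hτ
  rcases em ((mval σ < σ.length ∧ σ.getLast! ≤ mval σ) ∨
      (mval σ = σ.length ∧ σ.getLast! < mval σ)) with hcond | hcond
  swap
  · rw [if_neg hcond] at hτ; exact absurd hτ (by simp)
  rw [if_pos hcond] at hτ
  rw [Option.some_inj] at hτ
  subst hτ
  set τ : List ℕ := (σ.dropLast.take σ.getLast!).map (· + 1) ++ σ.dropLast.drop σ.getLast!
    with hτdef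
  set ℓ := σ.length with hℓ
  set m := mval σ with hm
  set nl := σ.getLast! with hnl
  have hml : m ≤ ℓ := mval_le σ
  have hnlm : nl ≤ m := by rcases hcond with ⟨h1, h2⟩ | ⟨h1, h2⟩ <;> omega
  have hnlℓ : nl < ℓ := by rcases hcond with ⟨h1, h2⟩ | ⟨h1, h2⟩ <;> omega
  have hℓ1 : 1 ≤ ℓ := by
    rw [hℓ]; exact List.length_pos_iff.mpr hne
  have hposi : ∀ i, i < ℓ → 1 ≤ σ[i]! := by
    intro i hi
    rw [getElem!_pos σ i hi]
    exact hpos _ (σ.getElem_mem hi)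
  have hdec : ∀ i j, i < j → j < ℓ → σ[j]! < σ[i]! := by
    intro i j hij hj
    rw [getElem!_pos σ i (by omega), getElem!_pos σ j hj]
    exact List.pairwise_iff_getElem.mp hsort i j (by omega) hj hij
  have hnlval : nl = σ[ℓ-1]! := List.getLast!_eq_getElem!
  have hnl1 : 1 ≤ nl := hnlval ▸ hposi (ℓ - 1) (by omega)
  have hℓ2 : 2 ≤ ℓ := by omega
  have hτlen : τ.length = ℓ - 1 := by
    rw [hτdef]
    simp only [List.length_append, List.length_map, List.length_take, List.length_drop,
      List.length_dropLast]
    omega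
  have hτget : ∀ i, i < ℓ - 1 → τ[i]! = if i < nl then σ[i]! + 1 else σ[i]! := by
    intro i hi
    have hid : i < τ.length := by omega
    rw [getElem!_pos τ i hid]
    simp only [hτdef]
    have hAlen : (List.map (fun x => x + 1) (List.take nl σ.dropLast)).length = nl := by
      simp only [List.length_map, List.length_take, List.length_dropLast]
      omega
    rw [List.getElem_append]
    by_cases hlt : i < nl
    · rw [dif_pos (by rw [hAlen]; exact hlt), if_pos hlt,
        List.getElem_map, List.getElem_take, List.getElem_dropLast,
        getElem!_pos σ i (by omega)]
    · rw [dif_neg (by rw [hAlen]; omega), if_neg hlt]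
      simp only [hAlen]
      rw [List.getElem_drop, List.getElem_dropLast,
        getElem!_pos σ i (by omega)]
      simp only [show nl + (i - nl) = i from by omega]
  have hmτlast : mval τ < τ.getLast! := by
    rcases Nat.lt_or_ge nl (ℓ - 1) with hA | hB
    · have hmτ : mval τ = nl := by
        apply mval_spec τ nl hnl1 (by omega)
        · intro i hi
          rw [hτget (i + 1) (by omega), hτget i (by omega),
            if_pos (by omega : i + 1 < nl), if_pos (by omega : i < nl)]
          have h1 := mval_consec σ i (by omega)
          have h2 := hdec i (i + 1) (by omega) (by omega)
          omega
        · intro _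
          rw [hτget nl (by omega), hτget (nl - 1) (by omega),
            if_neg (by omega : ¬ nl < nl), if_pos (by omega : nl - 1 < nl)]
          have h2 := hdec (nl - 1) nl (by omega) (by omega)
          omega
      have hlast : τ.getLast! = σ[ℓ - 1 - 1]! := by
        rw [List.getLast!_eq_getElem!, hτlen,
          hτget (ℓ - 1 - 1) (by omega), if_neg (by omega : ¬ ℓ - 1 - 1 < nl)]
      have := hdec (ℓ - 1 - 1) (ℓ - 1) (by omega) (by omega)
      omega
    · have hnlB : nl = ℓ - 1 := by omega
      have hmτ : mval τ = ℓ - 1 := by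
        apply mval_spec τ (ℓ - 1) (by omega) (by omega)
        · intro i hi
          rw [hτget (i + 1) (by omega), hτget i (by omega),
            if_pos (by omega : i + 1 < nl), if_pos (by omega : i < nl)]
          have h1 := mval_consec σ i (by omega)
          have h2 := hdec i (i + 1) (by omega) (by omega)
          omega
        · intro hlt; omega
      have hlast : τ.getLast! = σ[ℓ - 1 - 1]! + 1 := by
        rw [List.getLast!_eq_getElem!, hτlen,
          hτget (ℓ - 1 - 1) (by omega), if_pos (by omega : ℓ - 1 - 1 < nl)]
      have := hdec (ℓ - 1 - 1) (ℓ - 1) (by omega) (by omega)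
      omega
  have hτne : τ ≠ [] := by
    intro h
    rw [h] at hτlen
    simp at hτlen
    omega
  have hfail : ¬ ((mval τ < τ.length ∧ τ.getLast! ≤ mval τ) ∨
      (mval τ = τ.length ∧ τ.getLast! < mval τ)) := by
    rintro (⟨-, h⟩ | ⟨-, h⟩) <;> omega
  simp only [deltaStarS, if_neg hτne, if_neg hfail]
end

section
/- For every positive integer n that is neither of the form l(3l-1)/2 nor l(3l+1)/2 for any positive integer l, the number of partitions of n into an even number of distinct parts equals the number of partitions of n into an odd number of distinct parts. -/
open Finset

namespace Franklin

open List

def run : ℕ → List ℕ → ℕ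
  | _, [] => 0
  | a, x :: xs => if x = a then run (a-1) xs + 1 else 0

def stair (a t : ℕ) : List ℕ := (List.range t).map (fun i => a - i)

@[simp] lemma stair_zero (a : ℕ) : stair a 0 = [] := rfl

lemma stair_succ (a t : ℕ) : stair a (t+1) = a :: stair (a-1) t := by
  simp [stair, List.range_succ_eq_map, Function.comp_def, Nat.sub_sub, Nat.add_comm]

lemma stair_concat (a t : ℕ) : stair a (t+1) = stair a t ++ [a - t] := by
  simp [stair, List.range_succ]

@[simp] lemma stair_length (a t : ℕ) : (stair a t).length = t := by simp [stair]

lemma stair_ne_nil (a : ℕ) {t : ℕ} (ht : 0 < t) : stair a t ≠ [] := by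
  obtain ⟨u, rfl⟩ := Nat.exists_eq_add_of_lt ht
  simp [stair_succ]

lemma run_stair_append (a t : ℕ) (r : List ℕ) :
    run a (stair a t ++ r) = t + run (a - t) r := by
  induction t generalizing a with
  | zero => simp
  | succ t ih =>
    rw [stair_succ]
    show run a (a :: (stair (a-1) t ++ r)) = _
    rw [run, if_pos rfl, ih (a-1)]
    rw [show a - 1 - t = a - (t+1) by omega]
    omega

lemma take_run : ∀ (l : List ℕ) (a : ℕ), l.take (run a l) = stair a (run a l)
  | [], _ => by simp [run]
  | x :: xs, a => by
    rw [run]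
    by_cases hx : x = a
    · rw [if_pos hx, stair_succ, List.take_succ_cons, take_run xs (a-1), hx]
    · rw [if_neg hx]; simp

lemma head_drop_run : ∀ (l : List ℕ) (a : ℕ), (l.drop (run a l)).head? ≠ some (a - run a l)
  | [], _ => by simp [run]
  | x :: xs, a => by
    rw [run]
    by_cases hx : x = a
    · rw [if_pos hx, List.drop_succ_cons]
      have := head_drop_run xs (a-1)
      rwa [show a - (run (a-1) xs + 1) = a - 1 - run (a-1) xs by omega]
    · rw [if_neg hx]; simpa using hx

lemma stair_append {s t : ℕ} (hst : s ≤ t) (a : ℕ) :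
    stair a s ++ stair (a - s) (t - s) = stair a t := by
  induction s generalizing a t with
  | zero => simp
  | succ s ih =>
    obtain ⟨u, rfl⟩ := Nat.exists_eq_add_of_le hst
    have h1 : stair a (s+1) = a :: stair (a-1) s := stair_succ a s
    have h2 : stair a (s+1+u) = a :: stair (a-1) (s+u) := by
      rw [show s+1+u = (s+u)+1 by omega]; exact stair_succ a (s+u)
    rw [h1, h2, show a - (s+1) = (a-1) - s by omega, show s+1+u - (s+1) = (s+u) - s by omega,
      List.cons_append, ih (by omega) (a-1)]

lemma mem_stair {x a t : ℕ} (hx : x ∈ stair a t) : a - t < x + 1 ∧ x ≤ a := by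
  simp only [stair, List.mem_map, List.mem_range] at hx
  obtain ⟨i, hi, rfl⟩ := hx
  omega

lemma mem_stair' {x a t : ℕ} (ht : t ≤ a) (hx : x ∈ stair a t) : a - t < x := by
  simp only [stair, List.mem_map, List.mem_range] at hx
  obtain ⟨i, hi, rfl⟩ := hx
  omega

lemma sorted_stair {a t : ℕ} (h : t ≤ a + 1) : (stair a t).Pairwise (· > ·) := by
  induction t generalizing a with
  | zero => simp
  | succ t ih =>
    rw [stair_succ, List.pairwise_cons]
    refine ⟨fun b hb => ?_, ih (by omega)⟩
    rcases Nat.eq_zero_or_pos t with rfl|ht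
    · simp at hb
    · have h2 := (mem_stair hb).2
      show b < a
      omega

lemma stair_getLastD {a t : ℕ} (ht : 0 < t) (d : ℕ) : (stair a t).getLastD d = a - (t-1) := by
  obtain ⟨u, rfl⟩ := Nat.exists_eq_add_of_lt ht
  rw [show 0 + u + 1 = u + 1 by omega, stair_concat]
  simp

lemma stair_two_sum {a t : ℕ} (h : t ≤ a + 1) : 2 * (stair a t).sum + t * t = 2 * t * a + t := by
  induction t generalizing a with
  | zero => simp
  | succ t ih =>
    rw [stair_concat, List.sum_append]
    have ht := ih (a := a) (by omega)
    simp only [List.sum_cons, List.sum_nil]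
    have e : (t+1) * (t+1) = t*t + 2*t + 1 := by ring
    have e2 : 2 * (t+1) * a = 2*t*a + 2*a := by ring
    have h3 : a - t + t = a := by omega
    linarith [ht, e, e2, h3]

lemma stair_map_add (a s : ℕ) (h : s ≤ a + 1) : (stair a s).map (· + 1) = stair (a+1) s := by
  simp only [stair, List.map_map]
  apply List.map_congr_left
  intro i hi
  simp only [List.mem_range] at hi
  show a - i + 1 = a + 1 - i
  omega

lemma stair_map_sub (a s : ℕ) : (stair a s).map (· - 1) = stair (a-1) s := by
  simp only [stair, List.map_map]
  apply List.map_congr_left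
  intro i hi
  show a - i - 1 = a - 1 - i
  omega

lemma sum_map_pred (l : List ℕ) (h : ∀ x ∈ l, 0 < x) :
    (l.map (· - 1)).sum + l.length = l.sum := by
  induction l with
  | nil => simp
  | cons x xs ih =>
    simp only [List.map_cons, List.sum_cons, List.length_cons]
    have h1 := h x (by simp)
    have := ih (fun y hy => h y (by simp [hy]))
    omega

lemma last_mem_stair {t : ℕ} (ht : 0 < t) (a : ℕ) : a - (t-1) ∈ stair a t := by
  rcases t with _|u
  · omega
  · rw [stair_concat]; simp

lemma sum_map_succ (l : List ℕ) : (l.map (· + 1)).sum = l.sum + l.length := by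
  induction l with
  | nil => simp
  | cons x xs ih => simp [ih]; omega

@[simp] lemma run_nil (a : ℕ) : run a [] = 0 := rfl

lemma run_cons_ne {a y : ℕ} (ys : List ℕ) (h : y ≠ a) : run a (y :: ys) = 0 := by
  rw [run, if_neg h]

lemma run_le_length (a : ℕ) (l : List ℕ) : run a l ≤ l.length := by
  have := congrArg List.length (take_run l a)
  simp at this
  omega

def phi (l : List ℕ) : List ℕ :=
  if l.getLastD 0 ≤ run l.headI l then
    (l.dropLast.take (l.getLastD 0)).map (· + 1) ++ l.dropLast.drop (l.getLastD 0)
  else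
    (l.take (run l.headI l)).map (· - 1) ++ l.drop (run l.headI l) ++ [run l.headI l]

lemma decomp (l : List ℕ) (hl : l ≠ []) (hs : l.Pairwise (· > ·)) (hp : ∀ x ∈ l, 0 < x) :
    l = stair l.headI (run l.headI l) ++ l.drop (run l.headI l) ∧
    1 ≤ run l.headI l ∧ run l.headI l ≤ l.headI ∧ run l.headI l ≤ l.length ∧
    (∀ x ∈ l.drop (run l.headI l), x < l.headI - run l.headI l) := by
  set a := l.headI with ha
  set t := run a l with htdef
  have hdec : l = stair a t ++ l.drop t := by
    conv_lhs => rw [← List.take_append_drop t l, take_run l a]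
  have ht1 : 1 ≤ t := by
    obtain ⟨x, xs, rfl⟩ := List.exists_cons_of_ne_nil hl
    have : x = a := rfl
    rw [htdef, run, if_pos this]
    omega
  have htlen : t ≤ l.length := run_le_length a l
  have hta : t ≤ a := by
    have hmem : a - (t - 1) ∈ l := by
      rw [hdec]
      exact List.mem_append_left _ (last_mem_stair ht1 a)
    have := hp _ hmem
    omega
  refine ⟨hdec, ht1, hta, htlen, ?_⟩
  -- elements of the remainder are < a - t
  have hhead := head_drop_run l a
  rw [← htdef] at hhead
  have hcross : ∀ x ∈ stair a t, ∀ z ∈ l.drop t, x > z :=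
    (List.pairwise_append.mp (hdec ▸ hs)).2.2
  have hlast : a - (t-1) ∈ stair a t := last_mem_stair ht1 a
  rcases hdr : l.drop t with _ | ⟨y, ys⟩
  · simp
  · have hy : y ≠ a - t := fun hc => hhead (by rw [hdr, hc]; rfl)
    rw [hdr] at hcross
    have hsd : (l.drop t).Pairwise (· > ·) := hs.drop
    rw [hdr, List.pairwise_cons] at hsd
    intro x hx
    have hyle : y ≤ a - t := by
      have := hcross _ hlast y (by simp)
      omega
    rcases List.mem_cons.mp hx with rfl | hxys
    · omega
    · have := hsd.1 x hxys
      omega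


lemma getLastD_append_cons (x : List ℕ) (y d : ℕ) (ys : List ℕ) :
    (x ++ y :: ys).getLastD d = (y :: ys).getLastD d := by
  simp [List.getLastD_eq_getLast?, List.getLast?_append]
  cases h : (y::ys).getLast? with
  | none => simp [List.getLast?_eq_getLast (l := y::ys) (by simp)] at h
  | some z => simp

lemma getLastD_cons_mem (ys : List ℕ) (y d : ℕ) : (y :: ys).getLastD d ∈ y :: ys := by
  rw [List.getLastD_eq_getLast?, List.getLast?_eq_getLast (l := y :: ys) (by simp), Option.getD_some]
  exact List.getLast_mem _

lemma pent1 {t m : ℕ} (ht : 1 ≤ t) (hm : (stair (2*t-1) t).sum = m) : 2*m = t*(3*t-1) := by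
  rcases t with _|t
  · omega
  · have h2 := stair_two_sum (a := 2*(t+1)-1) (t := t+1) (by omega)
    rw [hm, show 2*(t+1)-1 = 2*t+1 by omega] at h2
    rw [show 3*(t+1)-1 = 3*t+2 by omega]
    nlinarith [h2]

lemma pent2 {t m : ℕ} (ht : 1 ≤ t) (hm : (stair (2*t) t).sum = m) : 2*m = t*(3*t+1) := by
  rcases t with _|t
  · omega
  · have h2 := stair_two_sum (a := 2*(t+1)) (t := t+1) (by omega)
    rw [hm] at h2
    nlinarith [h2]

theorem main (n : ℕ) (l : List ℕ) (hs : l.Pairwise (· > ·)) (hp : ∀ x ∈ l, 0 < x)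
    (hsum : l.sum = n) (hn : 0 < n)
    (h : ¬ ∃ u : ℕ, 0 < u ∧ (2*n = u*(3*u-1) ∨ 2*n = u*(3*u+1))) :
    (phi l).Pairwise (· > ·) ∧ (∀ x ∈ phi l, 0 < x) ∧ (phi l).sum = n ∧
      (Even (phi l).length ↔ ¬ Even l.length) ∧ phi (phi l) = l := by
  have hl : l ≠ [] := by rintro rfl; simp at hsum; omega
  obtain ⟨hdec, ht1, hta, htlen, hrlt⟩ := decomp l hl hs hp
  set a := l.headI with ha
  set t := run a l with htdef
  set r := l.drop t with hrdef
  obtain ⟨d, b, hdb⟩ : ∃ d b, l = d ++ [b] := by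
    obtain ⟨d, b, h2⟩ := (List.eq_nil_or_concat l).resolve_left hl
    exact ⟨d, b, by simpa using h2⟩
  have hb : l.getLastD 0 = b := by rw [hdb]; simp
  have hbl : b ∈ l := by rw [hdb]; simp
  have hbpos : 0 < b := hp b hbl
  have hdgt : ∀ x ∈ d, b < x := by
    have h2 := (List.pairwise_append.mp (hdb ▸ hs)).2.2
    intro x hx; exact h2 x hx b (by simp)
  have hllen : l.length = d.length + 1 := by rw [hdb]; simp
  by_cases hcase : b ≤ t
  · -- CASE A
    -- exclude failure: b ≤ d.length
    have hbd : b ≤ d.length := by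
      by_contra hgt
      push_neg at hgt
      have hbt : b = t := by omega
      have hteq : t = l.length := by omega
      have hre : r = [] := by rw [hrdef, hteq, List.drop_length]
      rw [hre, List.append_nil] at hdec
      have hbv : b = a - (t-1) := by rw [← hb, hdec, stair_getLastD ht1]
      have haval : a = 2*t - 1 := by omega
      exact h ⟨t, by omega, Or.inl (pent1 ht1 (by rw [← haval, ← hdec, hsum]))⟩
    have htake1 : (stair a t).take b = stair a b := by
      rw [← stair_append hcase a]; exact List.take_left' (stair_length a b)
    have htake : l.take b = stair a b := by
      conv_lhs => rw [hdec]
      rw [List.take_append_of_le_length (by simpa using hcase), htake1]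
    have hdtake : d.take b = stair a b := by
      have h2 : l.take b = d.take b := by rw [hdb, List.take_append_of_le_length hbd]
      rw [← h2, htake]
    set m := d.drop b with hm
    have hdsort : d.Pairwise (· > ·) := (List.pairwise_append.mp (hdb ▸ hs)).1
    have hmd : ∀ x ∈ m, x ∈ d := fun x hx => List.mem_of_mem_drop hx
    have hmb : ∀ x ∈ m, b < x := fun x hx => hdgt x (hmd x hx)
    have hdropl : l.drop b = m ++ [b] := by rw [hdb, List.drop_append_of_le_length hbd, hm]
    have hmub : ∀ x ∈ m, x ≤ a - b := by
      intro x hx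
      have hxl : x ∈ l.drop b := by rw [hdropl]; exact List.mem_append_left _ hx
      have hdrop2 : l.drop b = stair (a-b) (t-b) ++ r := by
        conv_lhs => rw [hdec, ← stair_append hcase a, List.append_assoc]
        rw [List.drop_left' (stair_length a b)]
      rw [hdrop2] at hxl
      rcases List.mem_append.mp hxl with hx1 | hx2
      · have := (mem_stair hx1).2; omega
      · have := hrlt x hx2; omega
    have hphi : phi l = stair (a+1) b ++ m := by
      simp only [phi]
      rw [hb, ← ha, ← htdef, if_pos hcase, hdb, List.dropLast_concat, hdtake,
        stair_map_add a b (by omega), hm]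
    have hsort' : (phi l).Pairwise (· > ·) := by
      rw [hphi]
      refine List.pairwise_append.mpr ⟨sorted_stair (by omega), hdsort.drop, ?_⟩
      intro x hx y hy
      have hx' := mem_stair' (show b ≤ a + 1 by omega) hx
      have := hmub y hy
      omega
    have hpos' : ∀ x ∈ phi l, 0 < x := by
      rw [hphi]; intro x hx
      rcases List.mem_append.mp hx with h1 | h2
      · have := mem_stair' (show b ≤ a + 1 by omega) h1; omega
      · have := hmb x h2; omega
    have hsum' : (phi l).sum = n := by
      rw [hphi, List.sum_append, ← stair_map_add a b (by omega), sum_map_succ, stair_length]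
      have h2 : l.sum = (stair a b).sum + (m.sum + b) := by
        conv_lhs => rw [← List.take_append_drop b l]
        rw [List.sum_append, htake, hdropl, List.sum_append]; simp
      omega
    have hlen' : (phi l).length + 1 = l.length := by
      rw [hphi, List.length_append, stair_length, hm, List.length_drop, hllen]
      omega
    -- components of phi l
    have hstair1 : stair (a+1) b = (a+1) :: stair a (b-1) := by
      rcases b with _|b'
      · omega
      · simpa using stair_succ (a+1) b'
    have hhead' : (phi l).headI = a + 1 := by rw [hphi, hstair1]; rfl
    have hrun' : run (a+1) (phi l) = b := by
      rw [hphi, run_stair_append]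
      rcases hmm : m with _|⟨y, ys⟩
      · simp
      · rw [run_cons_ne]
        · omega
        · have := hmub y (by rw [hmm]; simp)
          omega
    have hlastgt : b < (phi l).getLastD 0 := by
      rcases hmm : m with _|⟨y, ys⟩
      · have hdlen : d.length = b := by
          have : d.length - b = 0 := by rw [← List.length_drop, ← hm, hmm]; rfl
          omega
        have hd_eq : d = stair a b := by rw [← hdtake, ← hdlen, List.take_length]
        have hdne : d ≠ [] := by rw [hd_eq]; exact stair_ne_nil a hbpos
        have hlastd : a - (b-1) ∈ d := by rw [hd_eq]; exact last_mem_stair hbpos a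
        have h2b := hdgt _ hlastd
        rw [hphi, hmm, List.append_nil, stair_getLastD hbpos]
        omega
      · rw [hphi, hmm, getLastD_append_cons]
        exact hmb _ (by rw [hmm]; exact getLastD_cons_mem ys y 0)
    have hinv : phi (phi l) = l := by
      set q := phi l with hq
      rw [phi, hhead', hrun', if_neg (by omega : ¬ q.getLastD 0 ≤ b), hphi,
        List.take_left' (stair_length _ _), List.drop_left' (stair_length _ _),
        stair_map_sub, Nat.add_sub_cancel, ← hdtake, hm, List.take_append_drop]
      exact hdb.symm
    exact ⟨hsort', hpos', hsum', by rw [← hlen', Nat.even_add_one]; tauto, hinv⟩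
  · -- CASE B
    push_neg at hcase
    have hler : ∀ x ∈ r, b ≤ x := by
      intro x hx
      have hxl : x ∈ l := hdec ▸ List.mem_append_right _ hx
      rw [hdb] at hxl
      rcases List.mem_append.mp hxl with h1 | h2
      · exact le_of_lt (hdgt x h1)
      · simp at h2; omega
    have hat : 2*t < a := by
      rcases hrr : r with _|⟨y, ys⟩
      · rw [hrr, List.append_nil] at hdec
        have hbv : b = a - (t-1) := by rw [← hb, hdec, stair_getLastD ht1]
        by_contra hle
        push_neg at hle
        have ha2 : a = 2*t := by omega
        exact h ⟨t, by omega, Or.inr (pent2 ht1 (by rw [← ha2, ← hdec, hsum]))⟩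
      · have h1 := hrlt y (by rw [hrr]; simp)
        have h2 := hler y (by rw [hrr]; simp)
        omega
    have htake : l.take t = stair a t := by
      have h2 := take_run l a
      rw [← htdef] at h2
      exact h2
    have hphi : phi l = stair (a-1) t ++ (r ++ [t]) := by
      simp only [phi]
      rw [hb, ← ha, ← htdef, if_neg (by omega), htake, stair_map_sub, ← hrdef,
        List.append_assoc]
    have hstairmem : ∀ x ∈ stair (a-1) t, a - t ≤ x ∧ x ≤ a - 1 := by
      intro x hx
      have h1 := mem_stair' (show t ≤ a - 1 by omega) hx
      have h2 := (mem_stair hx).2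
      omega
    have hsort' : (phi l).Pairwise (· > ·) := by
      rw [hphi]
      refine List.pairwise_append.mpr ⟨sorted_stair (by omega), ?_, ?_⟩
      · refine List.pairwise_append.mpr ⟨hs.drop, by simp, ?_⟩
        intro x hx y hy
        simp at hy
        have := hler x hx
        omega
      · intro x hx y hy
        have h1 := (hstairmem x hx).1
        rcases List.mem_append.mp hy with h2 | h2
        · have := hrlt y h2; omega
        · simp at h2; omega
    have hpos' : ∀ x ∈ phi l, 0 < x := by
      rw [hphi]; intro x hx
      rcases List.mem_append.mp hx with h1 | h2
      · have := (hstairmem x h1).1; omega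
      · rcases List.mem_append.mp h2 with h3 | h3
        · exact hp x (hdec ▸ List.mem_append_right _ h3)
        · simp at h3; omega
    have hsum' : (phi l).sum = n := by
      have hstairpos : ∀ x ∈ stair a t, 0 < x := by
        intro x hx
        have := mem_stair' (show t ≤ a by omega) hx
        omega
      have hsp := sum_map_pred (stair a t) hstairpos
      rw [stair_map_sub, stair_length] at hsp
      have h2 : l.sum = (stair a t).sum + r.sum := by
        conv_lhs => rw [hdec]
        rw [List.sum_append]
      rw [hphi, List.sum_append, List.sum_append]
      simp only [List.sum_cons, List.sum_nil]
      omega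
    have hlen' : (phi l).length = l.length + 1 := by
      have h2 : l.length = t + r.length := by
        conv_lhs => rw [hdec]
        simp
      rw [hphi, List.length_append, List.length_append, stair_length]
      simp [h2]
      omega
    -- components of phi l
    have hstair1 : stair (a-1) t = (a-1) :: stair (a-2) (t-1) := by
      rcases t with _|t'
      · omega
      · simpa [show a - 1 - 1 = a - 2 by omega] using stair_succ (a-1) t'
    have hhead' : (phi l).headI = a - 1 := by rw [hphi, hstair1]; rfl
    have hrun' : run (a-1) (phi l) = t + run (a-1-t) (r ++ [t]) := by
      rw [hphi, run_stair_append]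
    have hlast' : (phi l).getLastD 0 = t := by
      rw [hphi, ← List.append_assoc]
      simp
    have hinv : phi (phi l) = l := by
      set q := phi l with hq
      rw [phi, hhead', hrun', hlast', if_pos (Nat.le_add_right t _), hphi,
        ← List.append_assoc, List.dropLast_concat,
        List.take_left' (stair_length _ _), List.drop_left' (stair_length _ _),
        stair_map_add (a-1) t (by omega), show a - 1 + 1 = a by omega]
      exact hdec.symm
    refine ⟨hsort', hpos', hsum', ?_, hinv⟩
    rw [hlen', Nat.even_add_one]


lemma sort_coe {l : List ℕ} (h : l.Pairwise (· > ·)) : (↑l : Multiset ℕ).sort (· ≥ ·) = l :=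
  List.Perm.eq_of_pairwise' (Multiset.pairwise_sort _ _) (h.imp le_of_lt)
    (Multiset.coe_eq_coe.mp (Multiset.sort_eq _ _))

lemma sort_facts (n : ℕ) (p : n.Partition) (hnd : p.parts.Nodup) :
    (p.parts.sort (· ≥ ·)).Pairwise (· > ·) ∧ (∀ x ∈ p.parts.sort (· ≥ ·), 0 < x) ∧
      (p.parts.sort (· ≥ ·)).sum = n := by
  refine ⟨(Multiset.pairwise_sort _ _).imp₂ (fun a b h1 h2 => lt_of_le_of_ne h1 (Ne.symm h2))
    (show List.Nodup _ from ?_), ?_, ?_⟩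
  · rw [← Multiset.coe_nodup, Multiset.sort_eq]; exact hnd
  · intro x hx
    exact p.parts_pos (by rwa [← Multiset.mem_sort (· ≥ ·)])
  · have := p.parts_sum
    rwa [← Multiset.sort_eq p.parts (· ≥ ·), Multiset.sum_coe] at this

variable {n : ℕ} (hn : 0 < n)
  (h : ¬ ∃ u : ℕ, 0 < u ∧ (2*n = u*(3*u-1) ∨ 2*n = u*(3*u+1)))

def next (p : n.Partition) (hnd : p.parts.Nodup) : n.Partition where
  parts := ↑(phi (p.parts.sort (· ≥ ·)))
  parts_pos := by
    intro x hx
    obtain ⟨h1, h2, h3⟩ := sort_facts n p hnd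
    exact (main n _ h1 h2 h3 hn h).2.1 x (by simpa using hx)
  parts_sum := by
    obtain ⟨h1, h2, h3⟩ := sort_facts n p hnd
    simpa using (main n _ h1 h2 h3 hn h).2.2.1

lemma next_nodup (p : n.Partition) (hnd : p.parts.Nodup) : (next hn h p hnd).parts.Nodup := by
  obtain ⟨h1, h2, h3⟩ := sort_facts n p hnd
  show Multiset.Nodup (↑(phi (p.parts.sort (· ≥ ·))) : Multiset ℕ)
  rw [Multiset.coe_nodup]
  exact (main n _ h1 h2 h3 hn h).1.nodup

lemma next_parity (p : n.Partition) (hnd : p.parts.Nodup) :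
    Even (Multiset.card (next hn h p hnd).parts) ↔ ¬ Even (Multiset.card p.parts) := by
  obtain ⟨h1, h2, h3⟩ := sort_facts n p hnd
  show Even (Multiset.card (↑(phi (p.parts.sort (· ≥ ·))) : Multiset ℕ)) ↔
    ¬ Even (Multiset.card p.parts)
  rw [Multiset.coe_card]
  rw [(main n _ h1 h2 h3 hn h).2.2.2.1]
  constructor <;> intro hx hc <;> apply hx
  · rwa [← Multiset.length_sort (· ≥ ·)] at hc
  · rwa [← Multiset.length_sort (· ≥ ·)]

lemma next_next (p : n.Partition) (hnd : p.parts.Nodup) (hnd2 : (next hn h p hnd).parts.Nodup) :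
    next hn h (next hn h p hnd) hnd2 = p := by
  obtain ⟨h1, h2, h3⟩ := sort_facts n p hnd
  have hm := main n _ h1 h2 h3 hn h
  apply Nat.Partition.ext
  show ↑(phi ((next hn h p hnd).parts.sort (· ≥ ·))) = p.parts
  have hparts : (next hn h p hnd).parts = ↑(phi (p.parts.sort (· ≥ ·))) := rfl
  rw [hparts, sort_coe hm.1, hm.2.2.2.2, Multiset.sort_eq]

end Franklin

/-- If `n ≥ 1` is not a generalized pentagonal number (`n ≠ l(3l-1)/2` and
`n ≠ l(3l+1)/2` for every positive `l`, written as `2n ≠ l(3l∓1)`), then the number of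
partitions of `n` into an even number of distinct parts equals the number of partitions
of `n` into an odd number of distinct parts. -/
theorem distinct_partitions_balanced (n : ℕ) (hn : 0 < n)
    (h : ¬ ∃ l : ℕ, 0 < l ∧ (2 * n = l * (3 * l - 1) ∨ 2 * n = l * (3 * l + 1))) :
    (Finset.univ.filter fun p : n.Partition =>
        p.parts.Nodup ∧ Even (Multiset.card p.parts)).card =
    (Finset.univ.filter fun p : n.Partition =>
        p.parts.Nodup ∧ ¬ Even (Multiset.card p.parts)).card := by
  refine Finset.card_bij'
    (fun p hp => Franklin.next hn h p (Finset.mem_filter.mp hp).2.1)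
    (fun p hp => Franklin.next hn h p (Finset.mem_filter.mp hp).2.1) ?_ ?_ ?_ ?_
  · intro p hp
    obtain ⟨-, hnd, hev⟩ := Finset.mem_filter.mp hp
    refine Finset.mem_filter.mpr ⟨Finset.mem_univ _, Franklin.next_nodup hn h p hnd, ?_⟩
    rw [Franklin.next_parity hn h p hnd]
    exact fun he => he hev
  · intro p hp
    obtain ⟨-, hnd, hev⟩ := Finset.mem_filter.mp hp
    refine Finset.mem_filter.mpr ⟨Finset.mem_univ _, Franklin.next_nodup hn h p hnd, ?_⟩
    exact (Franklin.next_parity hn h p hnd).mpr hev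
  · intro p hp
    exact Franklin.next_next hn h p (Finset.mem_filter.mp hp).2.1 _
  · intro p hp
    exact Franklin.next_next hn h p (Finset.mem_filter.mp hp).2.1 _
end

section
/- For each positive integer l and integer n ≥ l^2, the number of partitions of n of the form ((l)^{l+2s}, (n_2)^{2t_2}, ..., (n_k)^{2t_k}) with l > n_2 > ... > n_k > 0, s ≥ 0, t_i ≥ 1, equals the number of partitions of (n - l^2)/2 into parts of size at most l, when n - l^2 is even (and is zero when n - l^2 is odd). -/
open Finset

/-- A partition is harmonic with largest part `a` if `a` is its largest part, the
multiplicity of `a` is `a + 2s` for some `s ≥ 0`, and every other part has even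
multiplicity. -/
def IsHarmonicWithMax {n : ℕ} (a : ℕ) (p : n.Partition) : Prop :=
  a ∈ p.parts ∧ (∀ b ∈ p.parts, b ≤ a) ∧
    a ≤ p.parts.count a ∧ Even (p.parts.count a - a) ∧
    ∀ b ∈ p.parts, b ≠ a → Even (p.parts.count b)

/-- A harmonic partition: of the form `((n₁)^{n₁+2s}, (n₂)^{2t₂}, …, (n_k)^{2t_k})`. -/
def IsHarmonic {n : ℕ} (p : n.Partition) : Prop :=
  ∃ a, IsHarmonicWithMax a p

open scoped Classical

/-- The "half" of a multiset relative to `l`: part `l` loses `l` copies, then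
everything is halved. -/
def halfMultiset (l : ℕ) (t : Multiset ℕ) : Multiset ℕ :=
  ∑ b ∈ t.toFinset, Multiset.replicate ((t.count b - if b = l then l else 0) / 2) b

lemma count_halfMultiset (l : ℕ) (t : Multiset ℕ) (x : ℕ) :
    (halfMultiset l t).count x = (t.count x - if x = l then l else 0) / 2 := by
  rw [halfMultiset, Multiset.count_sum']
  by_cases hx : x ∈ t.toFinset
  · rw [Finset.sum_eq_single x
      (fun b _ hb => by rw [Multiset.count_replicate, if_neg hb])
      (fun h => absurd hx h)]
    rw [Multiset.count_replicate, if_pos rfl]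
  · rw [Finset.sum_eq_zero (fun b hb => by
      rw [Multiset.count_replicate, if_neg]
      rintro rfl; exact hx hb)]
    have : t.count x = 0 :=
      Multiset.count_eq_zero.mpr fun h => hx (Multiset.mem_toFinset.mpr h)
    omega

lemma harmonic_decomp {n l : ℕ} (p : n.Partition) (hp : IsHarmonicWithMax l p) :
    p.parts = Multiset.replicate l l + halfMultiset l p.parts + halfMultiset l p.parts := by
  obtain ⟨hmem, hmax, hle, heven, hothers⟩ := hp
  refine Multiset.ext.mpr fun x => ?_
  rw [Multiset.count_add, Multiset.count_add, Multiset.count_replicate,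
    count_halfMultiset]
  by_cases hx : x = l
  · subst hx
    obtain ⟨k, hk⟩ := heven
    rw [if_pos rfl]
    omega
  · rw [if_neg hx, if_neg (fun h => hx h.symm)]
    by_cases hxm : x ∈ p.parts
    · obtain ⟨k, hk⟩ := hothers x hxm hx
      omega
    · have : p.parts.count x = 0 := Multiset.count_eq_zero.mpr hxm
      omega

lemma harmonic_sum {n l : ℕ} (p : n.Partition) (hp : IsHarmonicWithMax l p) :
    n = l * l + ((halfMultiset l p.parts).sum + (halfMultiset l p.parts).sum) := by
  conv_lhs => rw [← p.parts_sum, harmonic_decomp p hp]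
  rw [Multiset.sum_add, Multiset.sum_add, Multiset.sum_replicate, smul_eq_mul]
  omega

/-- The half of a harmonic partition of `n`, as a partition of `m`. -/
def halfPartition (l n m : ℕ) (hnm : l ^ 2 + (m + m) = n) (p : n.Partition)
    (hp : IsHarmonicWithMax l p) : m.Partition where
  parts := halfMultiset l p.parts
  parts_pos := by
    intro x hx
    have hc : p.parts.count x ≠ 0 := by
      have := Multiset.count_pos.mpr hx
      rw [count_halfMultiset] at this
      omega
    exact p.parts_pos (Multiset.count_pos.mp (Nat.pos_of_ne_zero hc))
  parts_sum := by
    have h := harmonic_sum p hp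
    have hsq : l ^ 2 = l * l := pow_two l
    omega

/-- The double of a bounded partition of `m`, as a partition of `n`. -/
def doublePartition (l n m : ℕ) (hl : 0 < l) (hnm : l ^ 2 + (m + m) = n)
    (q : m.Partition) : n.Partition where
  parts := Multiset.replicate l l + q.parts + q.parts
  parts_pos := by
    intro x hx
    rw [Multiset.mem_add, Multiset.mem_add] at hx
    rcases hx with (hx | hx) | hx
    · rw [Multiset.eq_of_mem_replicate hx]; exact hl
    · exact q.parts_pos hx
    · exact q.parts_pos hx
  parts_sum := by
    rw [Multiset.sum_add, Multiset.sum_add, Multiset.sum_replicate, smul_eq_mul,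
      q.parts_sum]
    have hsq : l ^ 2 = l * l := pow_two l
    omega

lemma count_double (l n m : ℕ) (hl : 0 < l) (hnm : l ^ 2 + (m + m) = n)
    (q : m.Partition) (x : ℕ) :
    (doublePartition l n m hl hnm q).parts.count x =
      (if x = l then l else 0) + (q.parts.count x + q.parts.count x) := by
  simp only [doublePartition, Multiset.count_add, Multiset.count_replicate]
  by_cases hx : x = l
  · subst hx; rw [if_pos rfl]; omega
  · rw [if_neg hx, if_neg (fun h => hx h.symm)]; omega

lemma double_harmonic (l n m : ℕ) (hl : 0 < l) (hnm : l ^ 2 + (m + m) = n)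
    (q : m.Partition) (hq : ∀ x ∈ q.parts, x ≤ l) :
    IsHarmonicWithMax l (doublePartition l n m hl hnm q) := by
  have hc := count_double l n m hl hnm q
  refine ⟨?_, ?_, ?_, ?_, ?_⟩
  · rw [← Multiset.count_pos, hc l, if_pos rfl]; omega
  · intro b hb
    have hb' : b ∈ Multiset.replicate l l + q.parts + q.parts := hb
    rw [Multiset.mem_add, Multiset.mem_add] at hb'
    rcases hb' with (hb' | hb') | hb'
    · exact le_of_eq (Multiset.eq_of_mem_replicate hb')
    · exact hq b hb'
    · exact hq b hb'
  · rw [hc l, if_pos rfl]; omega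
  · rw [hc l, if_pos rfl]
    exact ⟨q.parts.count l, by omega⟩
  · intro b _ hb
    rw [hc b, if_neg hb]
    exact ⟨q.parts.count b, by omega⟩

/-- For `l ≥ 1` and `n ≥ l²`, the number of harmonic partitions of `n` with largest
part `l` equals the number of partitions of `(n - l²)/2` into parts of size at most `l`
when `n - l²` is even, and is zero when `n - l²` is odd. -/
theorem harmonic_count_eq_bounded_partitions (l n : ℕ) (hl : 0 < l) (hn : l ^ 2 ≤ n) :
    (Finset.univ.filter fun p : n.Partition => IsHarmonicWithMax l p).card =
      if (n - l ^ 2) % 2 = 0 then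
        (Finset.univ.filter fun p : ((n - l ^ 2) / 2).Partition =>
          ∀ x ∈ p.parts, x ≤ l).card
      else 0 := by
  split_ifs with h2
  · -- even case: bijection
    set m := (n - l ^ 2) / 2 with hm
    have hnm : l ^ 2 + (m + m) = n := by omega
    refine Finset.card_bij'
      (fun p hp => halfPartition l n m hnm p ((Finset.mem_filter.mp hp).2))
      (fun q _ => doublePartition l n m hl hnm q) ?_ ?_ ?_ ?_
    · intro p hp
      rw [Finset.mem_filter]
      refine ⟨Finset.mem_univ _, ?_⟩
      intro x hx
      have hp' := (Finset.mem_filter.mp hp).2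
      have hc : p.parts.count x ≠ 0 := by
        have := Multiset.count_pos.mpr hx
        simp only [halfPartition] at this
        rw [count_halfMultiset] at this
        omega
      exact hp'.2.1 x (Multiset.count_pos.mp (Nat.pos_of_ne_zero hc))
    · intro q hq
      rw [Finset.mem_filter]
      exact ⟨Finset.mem_univ _,
        double_harmonic l n m hl hnm q (fun x hx => (Finset.mem_filter.mp hq).2 x hx)⟩
    · intro p hp
      have hp' := (Finset.mem_filter.mp hp).2
      ext1
      simp only [doublePartition, halfPartition]
      exact (harmonic_decomp p hp').symm
    · intro q hq
      ext1
      simp only [halfPartition, doublePartition]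
      refine Multiset.ext.mpr fun x => ?_
      rw [count_halfMultiset, Multiset.count_add, Multiset.count_add,
        Multiset.count_replicate]
      by_cases hx : x = l
      · subst hx; rw [if_pos rfl]; omega
      · rw [if_neg hx, if_neg (fun h => hx h.symm)]; omega
  · -- odd case: no such partition
    rw [Finset.card_eq_zero, Finset.filter_eq_empty_iff]
    intro p _
    intro hp
    have h := harmonic_sum p hp
    have hsq : l ^ 2 = l * l := pow_two l
    omega
end

section
/- Let δ be defined on ordinary partitions of n (in multiplicity notation σ = (n_1^{m_1},...,n_k^{m_k}), n_1 > ... > n_k > 0) as follows: split the largest block (n_1)^{m_1} into (n_1-1)^{m_1} and a new single part of size m_1; δ(σ) = 0 if m_1 > n_1 - 1, or if m_1 fits at a position where some multiplicity strictly to its right (among blocks with part size less than m_1, or equal to m_1 for the coincident block) is odd; otherwise δ(σ) is the resulting partition with the new part m_1 inserted in its correct position (merging equal part sizes). Then δ(σ) is a partition of n with one more part than σ (or 0), and δ ∘ δ = 0. -/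
/-- A partition of `n` in multiplicity (block) notation: a list of blocks
`(nᵢ, mᵢ)` with strictly decreasing positive part sizes `nᵢ`, positive
multiplicities `mᵢ`, and `∑ nᵢ · mᵢ = n`. -/
def IsBlockPartition (n : ℕ) (σ : List (ℕ × ℕ)) : Prop :=
  (σ.map Prod.fst).Pairwise (· > ·) ∧ (∀ b ∈ σ, 0 < b.1 ∧ 0 < b.2) ∧
    (σ.map fun b => b.1 * b.2).sum = n

/-- The number of parts (the length) of a block partition. -/
def blockLength (σ : List (ℕ × ℕ)) : ℕ := (σ.map Prod.snd).sum

/-- Insert a single new part of size `p` into a block list, subject to the evenness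
conditions: all multiplicities of blocks at or to the right of the insertion point must
be even (when inserting at the very end there is no condition); returns `none` when the
condition fails. -/
def insertPart (p : ℕ) : List (ℕ × ℕ) → Option (List (ℕ × ℕ))
  | [] => some [(p, 1)]
  | (a, m) :: t =>
    if a < p then
      if ∀ b ∈ (a, m) :: t, Even b.2 then some ((p, 1) :: (a, m) :: t) else none
    else if a = p then
      if ∀ b ∈ (a, m) :: t, Even b.2 then some ((a, m + 1) :: t) else none
    else
      (insertPart p t).map fun t' => (a, m) :: t'

/-- Merge a block onto the front of a block list, combining blocks of equal part
size. -/
def mergeHead (b : ℕ × ℕ) : List (ℕ × ℕ) → List (ℕ × ℕ)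
  | [] => [b]
  | (a, m) :: t => if a = b.1 then (b.1, b.2 + m) :: t else b :: (a, m) :: t

/-- The bosonic coboundary map `δ` on ordinary partitions in block notation: split the
top block `(n₁)^{m₁}` into `(n₁-1)^{m₁}` and a new single part of size `m₁`, which is
inserted in its correct position (merging equal part sizes), provided `m₁ ≤ n₁ - 1` and
all multiplicities at or to the right of the insertion point are even; otherwise `δσ = 0`
(`none`). -/
def deltaB : List (ℕ × ℕ) → Option (List (ℕ × ℕ))
  | [] => none
  | (n1, m1) :: rest =>
    if n1 - 1 < m1 then none
    else (insertPart m1 rest).map (mergeHead (n1 - 1, m1))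

/-- Find the last block with odd multiplicity in a block list; if found at index
`t ≥ 1` (0-based: within this tail), return its part size `n_t` together with the list
in which its multiplicity has been decreased by one (omitting the block if it becomes
empty). -/
def removeLastOdd : List (ℕ × ℕ) → Option (ℕ × List (ℕ × ℕ))
  | [] => none
  | (a, m) :: t =>
    match removeLastOdd t with
    | some (nt, t') => some (nt, (a, m) :: t')
    | none => if ¬ Even m then some (a, if m = 1 then t else (a, m - 1) :: t) else none

/-- The bosonic map `δ*` on ordinary partitions in block notation.  Let `t` be the
maximal index with `m_t` odd (if any).  If `t = 1` or all multiplicities are even: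
`δ*σ = 0` unless `m₁ = n₁ + 2i + 1` for some `i ≥ 0`, in which case
`δ*σ = ((n₁+1)^{n₁}, (n₁)^{2i}, (n₂)^{m₂}, …)` (omitting empty blocks).  If `t ≥ 2`:
`δ*σ = 0` if `n_t > m₁`; otherwise
`δ*σ = ((n₁+1)^{n_t}, (n₁)^{m₁-n_t}, …, (n_t)^{m_t-1}, …)` (omitting empty blocks). -/
def deltaStarB : List (ℕ × ℕ) → Option (List (ℕ × ℕ))
  | [] => none
  | (n1, m1) :: rest =>
    match removeLastOdd rest with
    | some (nt, rest') =>
      if m1 < nt then none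
      else some ((n1 + 1, nt) ::
        (if m1 - nt = 0 then rest' else (n1, m1 - nt) :: rest'))
    | none =>
      if n1 < m1 ∧ ¬ Even (m1 - n1) then
        some ((n1 + 1, n1) ::
          (if m1 - n1 - 1 = 0 then rest else (n1, m1 - n1 - 1) :: rest))
      else none

lemma insertPart_none {p : ℕ} {l : List (ℕ × ℕ)} {b : ℕ × ℕ} (hb : b ∈ l)
    (hb1 : b.1 ≤ p) (hb2 : ¬ Even b.2) : insertPart p l = none := by
  induction l with
  | nil => exact absurd hb List.not_mem_nil
  | cons hd t ih =>
    obtain ⟨a, m⟩ := hd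
    simp only [insertPart]
    split_ifs with h1 h2 h3 h4
    · exact absurd (h2 b hb) hb2
    · rfl
    · exact absurd (h4 b hb) hb2
    · rfl
    · have hbt : b ∈ t := by
        rcases List.mem_cons.mp hb with h | h
        · exfalso; subst h; simp at hb1 h1 h3; omega
        · exact h
      rw [ih hbt]; rfl

lemma insertPart_spec {p : ℕ} (hp : 0 < p) :
    ∀ {l : List (ℕ × ℕ)}, ((l.map Prod.fst).Pairwise (· > ·)) →
    (∀ b ∈ l, 0 < b.1 ∧ 0 < b.2) →
    ∀ {t'}, insertPart p l = some t' →
      ((t'.map Prod.fst).Pairwise (· > ·)) ∧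
      (∀ b ∈ t', 0 < b.1 ∧ 0 < b.2) ∧
      (t'.map fun b => b.1 * b.2).sum = p + (l.map fun b => b.1 * b.2).sum ∧
      (t'.map Prod.snd).sum = (l.map Prod.snd).sum + 1 ∧
      (∀ b ∈ t', b.1 = p ∨ b.1 ∈ l.map Prod.fst) := by
  intro l
  induction l with
  | nil =>
    intro _ _ t' ht'
    simp only [insertPart, Option.some.injEq] at ht'
    subst ht'
    refine ⟨by simp, by simp [hp], by simp, by simp, by simp⟩
  | cons hd t ih =>
    obtain ⟨a, m⟩ := hd
    intro hsort hpos t' ht'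
    simp only [List.map_cons, List.pairwise_cons] at hsort
    obtain ⟨hlt, hsr⟩ := hsort
    have hpost : ∀ b ∈ t, 0 < b.1 ∧ 0 < b.2 := fun b hb => hpos b (List.mem_cons_of_mem _ hb)
    have hposa := hpos (a, m) (List.mem_cons_self)
    simp only [insertPart] at ht'
    split_ifs at ht' with h1 h2 h3 h4
    · -- a < p, all even
      cases ht'
      refine ⟨?_, ?_, ?_, ?_, ?_⟩
      · simp only [List.map_cons, List.pairwise_cons]
        refine ⟨?_, hlt, hsr⟩
        intro b hb
        rcases List.mem_cons.mp hb with h | h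
        · omega
        · have := hlt b h; omega
      · intro b hb
        rcases List.mem_cons.mp hb with h | h
        · subst h; exact ⟨hp, one_pos⟩
        · exact hpos b h
      · simp
      · simp; omega
      · intro b hb
        rcases List.mem_cons.mp hb with h | h
        · subst h; exact Or.inl rfl
        · exact Or.inr (List.mem_map_of_mem h)
    · -- a = p
      cases ht'
      subst h3
      refine ⟨?_, ?_, ?_, ?_, ?_⟩
      · simp only [List.map_cons, List.pairwise_cons]; exact ⟨hlt, hsr⟩
      · intro b hb
        rcases List.mem_cons.mp hb with h | h
        · subst h; exact ⟨hposa.1, by omega⟩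
        · exact hpos b (List.mem_cons_of_mem _ h)
      · simp; ring
      · simp; omega
      · intro b hb
        rcases List.mem_cons.mp hb with h | h
        · subst h; exact Or.inl rfl
        · exact Or.inr (List.mem_map_of_mem (List.mem_cons_of_mem _ h))
    · -- a > p, recurse
      rw [Option.map_eq_some_iff] at ht'
      obtain ⟨t'', h'', rfl⟩ := ht'
      obtain ⟨s1, s2, s3, s4, s5⟩ := ih hsr hpost h''
      have hap : p < a := by omega
      refine ⟨?_, ?_, ?_, ?_, ?_⟩
      · simp only [List.map_cons, List.pairwise_cons]
        refine ⟨?_, s1⟩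
        intro x hx
        rcases List.mem_map.mp hx with ⟨b, hb, rfl⟩
        rcases s5 b hb with h | h
        · omega
        · exact hlt _ h
      · intro b hb
        rcases List.mem_cons.mp hb with h | h
        · subst h; exact hposa
        · exact s2 b h
      · simp only [List.map_cons, List.sum_cons] at s3 ⊢
        omega
      · simp only [List.map_cons, List.sum_cons] at s4 ⊢
        omega
      · intro b hb
        rcases List.mem_cons.mp hb with h | h
        · subst h; exact Or.inr (by simp)
        · rcases s5 b h with h' | h'
          · exact Or.inl h'
          · exact Or.inr (by simp [h'])

lemma insertPart_odd {p : ℕ} : ∀ {l t' : List (ℕ × ℕ)}, insertPart p l = some t' →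
    ∃ t1 μ t2, t' = t1 ++ (p, μ) :: t2 ∧ ¬ Even μ ∧ ∀ b ∈ t1, p < b.1 := by
  intro l
  induction l with
  | nil =>
    intro t' ht'
    simp only [insertPart, Option.some.injEq] at ht'
    subst ht'
    exact ⟨[], 1, [], rfl, by simp, by simp⟩
  | cons hd t ih =>
    obtain ⟨a, m⟩ := hd
    intro t' ht'
    simp only [insertPart] at ht'
    split_ifs at ht' with h1 h2 h3 h4
    · cases ht'
      exact ⟨[], 1, (a, m) :: t, rfl, by simp, by simp⟩
    · cases ht'
      subst h3
      have hm : Even m := h4 (a, m) (List.mem_cons_self)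
      exact ⟨[], m + 1, t, rfl, by simp [Nat.even_add_one, hm], by simp⟩
    · rw [Option.map_eq_some_iff] at ht'
      obtain ⟨t'', h'', rfl⟩ := ht'
      obtain ⟨t1, μ, t2, rfl, hμ, ht1⟩ := ih h''
      refine ⟨(a, m) :: t1, μ, t2, rfl, hμ, ?_⟩
      intro b hb
      rcases List.mem_cons.mp hb with h | h
      · subst h; omega
      · exact ht1 b h

lemma deltaB_cons_none {N M : ℕ} {r : List (ℕ × ℕ)} {μ m1 : ℕ}
    (hmem : (m1, μ) ∈ r) (hμ : ¬ Even μ) (hM : m1 ≤ M) :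
    deltaB ((N, M) :: r) = none := by
  by_cases h : N - 1 < M
  · simp [deltaB, h]
  · have : insertPart M r = none := insertPart_none hmem hM hμ
    simp [deltaB, h, this]
/-- `δ` maps a partition of `n` to a partition of `n` with one more part (or to `0`,
i.e. `none`), and `δ ∘ δ = 0`. -/
theorem deltaB_wellDefined_and_sq_zero (n : ℕ) (σ : List (ℕ × ℕ))
    (hσ : IsBlockPartition n σ) :
    (∀ τ, deltaB σ = some τ →
      IsBlockPartition n τ ∧ blockLength τ = blockLength σ + 1) ∧
    (∀ τ, deltaB σ = some τ → deltaB τ = none) := by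
  obtain ⟨hsort, hpos, hsum⟩ := hσ
  have key : ∀ τ, deltaB σ = some τ →
      (IsBlockPartition n τ ∧ blockLength τ = blockLength σ + 1) ∧ deltaB τ = none := by
    intro τ hτ
    cases σ with
    | nil => simp [deltaB] at hτ
    | cons hd rest =>
      obtain ⟨n1, m1⟩ := hd
      have hn1 : 0 < n1 := (hpos _ (List.mem_cons_self)).1
      have hm1 : 0 < m1 := (hpos _ (List.mem_cons_self)).2
      simp only [deltaB] at hτ
      split_ifs at hτ with hc
      rw [Option.map_eq_some_iff] at hτ
      obtain ⟨t', ht', rfl⟩ := hτ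
      simp only [List.map_cons, List.pairwise_cons] at hsort
      obtain ⟨hlt, hsr⟩ := hsort
      have hpost : ∀ b ∈ rest, 0 < b.1 ∧ 0 < b.2 :=
        fun b hb => hpos b (List.mem_cons_of_mem _ hb)
      obtain ⟨s1, s2, s3, s4, s5⟩ := insertPart_spec hm1 hsr hpost ht'
      obtain ⟨t1, μ, t2, hdec, hμ, ht1⟩ := insertPart_odd ht'
      have hμ1 : 1 ≤ μ := by
        rcases Nat.eq_zero_or_pos μ with h | h
        · exact absurd (h ▸ Even.zero) hμ
        · exact h
      have hm1n : m1 ≤ n1 - 1 := by omega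
      have hparts : ∀ x ∈ t'.map Prod.fst, x ≤ n1 - 1 := by
        intro x hx
        rcases List.mem_map.mp hx with ⟨b, hb, rfl⟩
        rcases s5 b hb with h | h
        · omega
        · have := hlt _ h; omega
      have e : (n1 - 1) * m1 + m1 = n1 * m1 := by
        cases n1 with
        | zero => omega
        | succ k => simp [Nat.succ_sub_one]; ring
      simp only [List.map_cons, List.sum_cons] at hsum
      have hsum' : (n1 - 1) * m1 + (t'.map fun b => b.1 * b.2).sum = n := by
        rw [s3, ← Nat.add_assoc, e]
        exact hsum
      cases t' with
      | nil => exact absurd hdec (by simp)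
      | cons hd2 t2' =>
        obtain ⟨a, m2⟩ := hd2
        have ha1 : a ≤ n1 - 1 := hparts a (by simp)
        by_cases ha : a = n1 - 1
        · -- merge case
          have hτeq : mergeHead (n1 - 1, m1) ((a, m2) :: t2') = (n1 - 1, m1 + m2) :: t2' := by
            simp [mergeHead, ha]
          rw [hτeq]
          subst ha
          simp only [List.map_cons, List.pairwise_cons] at s1
          constructor
          · constructor
            · refine ⟨?_, ?_, ?_⟩
              · simp only [List.map_cons, List.pairwise_cons]
                exact s1
              · intro b hb
                rcases List.mem_cons.mp hb with h | h
                · subst h; constructor <;> simp <;> omega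
                · exact s2 b (List.mem_cons_of_mem _ h)
              · simp only [List.map_cons, List.sum_cons] at hsum' ⊢
                rw [Nat.mul_add, Nat.add_assoc]
                exact hsum'
            · simp only [blockLength, List.map_cons, List.sum_cons] at s4 ⊢
              omega
          · -- deltaB τ = none
            cases t1 with
            | nil =>
              simp only [List.nil_append, List.cons.injEq, Prod.mk.injEq] at hdec
              obtain ⟨⟨ham, hμm⟩, -⟩ := hdec
              have : n1 - 1 - 1 < m1 + m2 := by omega
              simp [deltaB, this]
            | cons b t1' =>
              have hmem : (m1, μ) ∈ t2' := by
                simp only [List.cons_append, List.cons.injEq] at hdec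
                rw [hdec.2]
                exact List.mem_append_right _ (List.mem_cons_self)
              exact deltaB_cons_none hmem hμ (Nat.le_add_right _ _)
        · -- no merge
          have hτeq : mergeHead (n1 - 1, m1) ((a, m2) :: t2') =
              (n1 - 1, m1) :: (a, m2) :: t2' := by
            simp [mergeHead, ha]
          rw [hτeq]
          constructor
          · constructor
            · refine ⟨?_, ?_, ?_⟩
              · simp only [List.map_cons, List.pairwise_cons] at s1 ⊢
                refine ⟨?_, s1⟩
                intro x hx
                rcases List.mem_cons.mp hx with h | h
                · omega
                · have h1 := s1.1 x h
                  omega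
              · intro b hb
                rcases List.mem_cons.mp hb with h | h
                · subst h; exact ⟨by omega, hm1⟩
                · exact s2 b h
              · exact hsum'
            · simp only [blockLength, List.map_cons, List.sum_cons] at s4 ⊢
              omega
          · have hmem : (m1, μ) ∈ (a, m2) :: t2' := by
              rw [hdec]
              exact List.mem_append_right _ (List.mem_cons_self)
            exact deltaB_cons_none hmem hμ le_rfl
  exact ⟨fun τ h => (key τ h).1, fun τ h => (key τ h).2⟩
end

section
/- With δ and δ* defined on ordinary partitions of n as in the bosonic setting, for partitions σ, τ of n: (i) if δ(σ) = τ ≠ 0 then δ*(τ) = σ, and (ii) if δ*(τ) = σ ≠ 0 then δ(σ) = τ. Moreover δ* ∘ δ* = 0. -/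
section Aux

lemma rlo_cons (a m : ℕ) (t : List (ℕ × ℕ)) :
    removeLastOdd ((a, m) :: t) =
      match removeLastOdd t with
      | some (nt, t') => some (nt, (a, m) :: t')
      | none => if ¬ Even m then some (a, if m = 1 then t else (a, m - 1) :: t)
                else none := rfl

lemma ip_cons (p a m : ℕ) (t : List (ℕ × ℕ)) :
    insertPart p ((a, m) :: t) =
      if a < p then
        if ∀ b ∈ (a, m) :: t, Even b.2 then some ((p, 1) :: (a, m) :: t) else none
      else if a = p then
        if ∀ b ∈ (a, m) :: t, Even b.2 then some ((a, m + 1) :: t) else none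
      else (insertPart p t).map fun t' => (a, m) :: t' := rfl

lemma dsb_cons (n1 m1 : ℕ) (rest : List (ℕ × ℕ)) :
    deltaStarB ((n1, m1) :: rest) =
      match removeLastOdd rest with
      | some (nt, rest') =>
        if m1 < nt then none
        else some ((n1 + 1, nt) ::
          (if m1 - nt = 0 then rest' else (n1, m1 - nt) :: rest'))
      | none =>
        if n1 < m1 ∧ ¬ Even (m1 - n1) then
          some ((n1 + 1, n1) ::
            (if m1 - n1 - 1 = 0 then rest else (n1, m1 - n1 - 1) :: rest))
        else none := rfl

lemma rlo_none_iff (l : List (ℕ × ℕ)) :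
    removeLastOdd l = none ↔ ∀ b ∈ l, Even b.2 := by
  induction l with
  | nil => simp [removeLastOdd]
  | cons hd tl ih =>
    obtain ⟨a, m⟩ := hd
    rw [rlo_cons]
    cases h : removeLastOdd tl with
    | some v =>
      obtain ⟨q, t'⟩ := v
      refine iff_of_false (by simp) ?_
      intro hall
      have : ∀ b ∈ tl, Even b.2 := fun b hb => hall b (List.mem_cons_of_mem _ hb)
      rw [ih.2 this] at h; exact absurd h (by simp)
    | none =>
      have htl : ∀ b ∈ tl, Even b.2 := ih.1 h
      by_cases hm : Even m
      · rw [if_neg (not_not_intro hm)]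
        refine iff_of_true rfl ?_
        intro b hb
        rcases List.mem_cons.1 hb with h1 | h2
        · subst h1; exact hm
        · exact htl b h2
      · rw [if_pos hm]
        exact iff_of_false (by simp) fun hall => hm (hall (a, m) (List.mem_cons_self))

lemma rlo_mem {l : List (ℕ × ℕ)} {p : ℕ} {l' : List (ℕ × ℕ)}
    (h : removeLastOdd l = some (p, l')) : ∃ m, (p, m) ∈ l := by
  induction l generalizing l' with
  | nil => simp [removeLastOdd] at h
  | cons hd tl ih =>
    obtain ⟨a, m⟩ := hd
    rw [rlo_cons] at h
    cases h' : removeLastOdd tl with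
    | some v =>
      obtain ⟨q, t'⟩ := v
      rw [h'] at h
      simp only [Option.some.injEq, Prod.mk.injEq] at h
      obtain ⟨m', hm'⟩ := ih (l' := t') (by rw [h', h.1])
      exact ⟨m', List.mem_cons_of_mem _ hm'⟩
    | none =>
      rw [h'] at h
      by_cases hm : Even m
      · rw [if_neg (not_not_intro hm)] at h; exact absurd h (by simp)
      · rw [if_pos hm] at h
        simp only [Option.some.injEq, Prod.mk.injEq] at h
        exact ⟨m, by rw [← h.1]; exact List.mem_cons_self⟩

lemma insertPart_parts {p : ℕ} {rest r : List (ℕ × ℕ)}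
    (h : insertPart p rest = some r) :
    ∀ b ∈ r, b.1 = p ∨ b.1 ∈ rest.map Prod.fst := by
  induction rest generalizing r with
  | nil =>
    simp only [insertPart, Option.some.injEq] at h
    subst h; simp
  | cons hd tl ih =>
    obtain ⟨a, m⟩ := hd
    rw [ip_cons] at h
    split_ifs at h with h1 h2 h3 h4
    · simp only [Option.some.injEq] at h; subst h
      intro b hb
      rcases List.mem_cons.1 hb with h' | h'
      · subst h'; left; rfl
      · right; simp only [List.map_cons, List.mem_cons, List.mem_map]
        rcases List.mem_cons.1 h' with h'' | h''
        · left; rw [h'']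
        · right; exact ⟨b, h'', rfl⟩
    · simp only [Option.some.injEq] at h; subst h
      intro b hb
      rcases List.mem_cons.1 hb with h' | h'
      · subst h'; right; simp
      · right; simp only [List.map_cons, List.mem_cons, List.mem_map]
        right; exact ⟨b, h', rfl⟩
    · simp only [Option.map_eq_some_iff] at h
      obtain ⟨t', ht', rfl⟩ := h
      intro b hb
      rcases List.mem_cons.1 hb with h' | h'
      · subst h'; right; simp
      · rcases ih ht' b h' with h'' | h''
        · left; exact h''
        · right; simp only [List.map_cons, List.mem_cons]; right; exact h''

lemma insertPart_rlo {p : ℕ} {rest r : List (ℕ × ℕ)}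
    (hpos : ∀ b ∈ rest, 0 < b.2)
    (h : insertPart p rest = some r) :
    removeLastOdd r = some (p, rest) := by
  induction rest generalizing r with
  | nil =>
    simp only [insertPart, Option.some.injEq] at h; subst h
    simp [removeLastOdd]
  | cons hd tl ih =>
    obtain ⟨a, m⟩ := hd
    rw [ip_cons] at h
    split_ifs at h with h1 h2 h3 h4
    · -- r = (p,1) :: (a,m) :: tl, all even
      simp only [Option.some.injEq] at h; subst h
      have hnone : removeLastOdd ((a, m) :: tl) = none := (rlo_none_iff _).2 h2
      rw [rlo_cons, hnone]
      norm_num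
    · -- a = p, r = (a, m+1) :: tl
      simp only [Option.some.injEq] at h; subst h
      have htl : removeLastOdd tl = none :=
        (rlo_none_iff _).2 fun b hb => h4 b (List.mem_cons_of_mem _ hb)
      have hm : Even m := h4 (a, m) (List.mem_cons_self)
      have hm0 : 0 < m := (hpos (a, m) (List.mem_cons_self))
      have hodd : ¬ Even (m + 1) := by simp [Nat.even_add_one, hm]
      rw [rlo_cons, htl]
      simp only [hodd, not_false_iff, if_true]
      rw [if_neg (by omega)]
      simp [h3, Nat.add_sub_cancel]
    · simp only [Option.map_eq_some_iff] at h
      obtain ⟨t', ht', rfl⟩ := h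
      have key := ih (fun b hb => hpos b (List.mem_cons_of_mem _ hb)) ht'
      rw [rlo_cons, key]

lemma rlo_insertPart {r : List (ℕ × ℕ)} {p : ℕ} {rest : List (ℕ × ℕ)}
    (hs : (r.map Prod.fst).Pairwise (· > ·))
    (h : removeLastOdd r = some (p, rest)) :
    insertPart p rest = some r := by
  induction r generalizing rest with
  | nil => simp [removeLastOdd] at h
  | cons hd tl ih =>
    obtain ⟨a, m⟩ := hd
    simp only [List.map_cons, List.pairwise_cons] at hs
    obtain ⟨hgt, hstl⟩ := hs
    rw [rlo_cons] at h
    cases h' : removeLastOdd tl with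
    | some v =>
      obtain ⟨q, t'⟩ := v
      rw [h'] at h
      simp only [Option.some.injEq, Prod.mk.injEq] at h
      obtain ⟨rfl, rfl⟩ := h
      obtain ⟨m', hm'⟩ := rlo_mem h'
      have hap : q < a := hgt q (by simp; exact ⟨m', hm'⟩)
      have key := ih hstl h'
      rw [ip_cons, if_neg (by omega), if_neg (by omega), key]
      rfl
    | none =>
      rw [h'] at h
      by_cases hm : Even m
      · rw [if_neg (not_not_intro hm)] at h; exact absurd h (by simp)
      · rw [if_pos hm] at h
        simp only [Option.some.injEq, Prod.mk.injEq] at h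
        obtain ⟨rfl, rfl⟩ := h
        have htl : ∀ b ∈ tl, Even b.2 := (rlo_none_iff _).1 h'
        by_cases hm1 : m = 1
        · rw [if_pos hm1]
          cases tl with
          | nil => simp [insertPart, hm1]
          | cons hd2 tl2 =>
            obtain ⟨b, k⟩ := hd2
            have hb : b < a := hgt b (by simp)
            rw [ip_cons, if_pos hb, if_pos (by intro c hc; exact htl c hc), hm1]
        · rw [if_neg hm1]
          have hme : Even (m - 1) := by
            rcases Nat.even_or_odd m with he | ho
            · exact absurd he hm
            · obtain ⟨k, hk⟩ := ho; subst hk; simpa using even_two_mul k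
          have hall : ∀ b ∈ (a, m - 1) :: tl, Even b.2 := by
            intro b hb
            rcases List.mem_cons.1 hb with h1 | h2
            · subst h1; exact hme
            · exact htl b h2
          rw [ip_cons, if_neg (lt_irrefl a), if_pos rfl, if_pos hall]
          have hm0 : m ≠ 0 := by rintro rfl; exact hm Even.zero
          have : m - 1 + 1 = m := by omega
          rw [this]

lemma rlo_rlo {l : List (ℕ × ℕ)} {p q : ℕ} {l' l'' : List (ℕ × ℕ)}
    (hs : (l.map Prod.fst).Pairwise (· > ·))
    (h : removeLastOdd l = some (p, l'))
    (h2 : removeLastOdd l' = some (q, l'')) : p < q := by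
  induction l generalizing p l' l'' with
  | nil => simp [removeLastOdd] at h
  | cons hd tl ih =>
    obtain ⟨a, m⟩ := hd
    simp only [List.map_cons, List.pairwise_cons] at hs
    obtain ⟨hgt, hstl⟩ := hs
    rw [rlo_cons] at h
    cases h' : removeLastOdd tl with
    | some v =>
      obtain ⟨p0, t'⟩ := v
      rw [h'] at h
      simp only [Option.some.injEq, Prod.mk.injEq] at h
      obtain ⟨rfl, rfl⟩ := h
      rw [rlo_cons] at h2
      cases h'' : removeLastOdd t' with
      | some w =>
        obtain ⟨q0, t''⟩ := w
        rw [h''] at h2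
        simp only [Option.some.injEq, Prod.mk.injEq] at h2
        obtain ⟨rfl, _⟩ := h2
        exact ih hstl h' h''
      | none =>
        rw [h''] at h2
        by_cases hm : Even m
        · rw [if_neg (not_not_intro hm)] at h2; exact absurd h2 (by simp)
        · rw [if_pos hm] at h2
          simp only [Option.some.injEq, Prod.mk.injEq] at h2
          obtain ⟨rfl, _⟩ := h2
          obtain ⟨m', hm'⟩ := rlo_mem h'
          exact hgt p0 (by simp; exact ⟨m', hm'⟩)
    | none =>
      rw [h'] at h
      by_cases hm : Even m
      · rw [if_neg (not_not_intro hm)] at h; exact absurd h (by simp)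
      · rw [if_pos hm] at h
        simp only [Option.some.injEq, Prod.mk.injEq] at h
        obtain ⟨rfl, rfl⟩ := h
        have htl : ∀ b ∈ tl, Even b.2 := (rlo_none_iff _).1 h'
        exfalso
        by_cases hm1 : m = 1
        · rw [if_pos hm1, (rlo_none_iff _).2 htl] at h2; exact absurd h2 (by simp)
        · rw [if_neg hm1] at h2
          have hme : Even (m - 1) := by
            rcases Nat.even_or_odd m with he | ho
            · exact absurd he hm
            · obtain ⟨k, hk⟩ := ho; subst hk; simpa using even_two_mul k
          have hn : removeLastOdd ((a, m - 1) :: tl) = none := by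
            apply (rlo_none_iff _).2
            intro b hb
            rcases List.mem_cons.1 hb with h1 | hx
            · subst h1; exact hme
            · exact htl b hx
          rw [hn] at h2; exact absurd h2 (by simp)

end Aux

lemma mh_nil (b : ℕ × ℕ) : mergeHead b [] = [b] := rfl

lemma mh_cons (b1 b2 a m : ℕ) (t : List (ℕ × ℕ)) :
    mergeHead (b1, b2) ((a, m) :: t) =
      if a = b1 then (b1, b2 + m) :: t else (b1, b2) :: (a, m) :: t := rfl

lemma main_i {n : ℕ} {σ τ : List (ℕ × ℕ)} (hσ : IsBlockPartition n σ)
    (h : deltaB σ = some τ) : deltaStarB τ = some σ := by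
  obtain ⟨hsort, hpos, -⟩ := hσ
  cases σ with
  | nil => simp [deltaB] at h
  | cons hd rest =>
    obtain ⟨n1, m1⟩ := hd
    simp only [List.map_cons, List.pairwise_cons] at hsort
    obtain ⟨hgt, hsrest⟩ := hsort
    have hm1pos : 0 < m1 := (hpos (n1, m1) (List.mem_cons_self)).2
    have hrpos : ∀ b ∈ rest, 0 < b.2 := fun b hb => (hpos b (List.mem_cons_of_mem _ hb)).2
    simp only [deltaB] at h
    by_cases hlt : n1 - 1 < m1
    · rw [if_pos hlt] at h; exact absurd h (by simp)
    rw [if_neg hlt, Option.map_eq_some_iff] at h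
    obtain ⟨r, hr, hτeq⟩ := h
    have hA := insertPart_rlo hrpos hr
    cases r with
    | nil => simp [removeLastOdd] at hA
    | cons hd' t =>
      obtain ⟨a', m'⟩ := hd'
      have hparts := insertPart_parts hr (a', m') (List.mem_cons_self)
      have ha' : a' ≤ n1 - 1 := by
        rcases hparts with h' | h'
        · simp only at h'; omega
        · have := hgt a' h'; omega
      by_cases heq : a' = n1 - 1
      · subst heq
        rw [mh_cons, if_pos rfl] at hτeq
        subst hτeq
        rw [rlo_cons] at hA
        cases hrt : removeLastOdd t with
        | some v =>
          obtain ⟨q, t'⟩ := v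
          rw [hrt] at hA
          simp only [Option.some.injEq, Prod.mk.injEq] at hA
          obtain ⟨rfl, rfl⟩ := hA
          have hm' : 0 < m' := (hpos (n1 - 1, m') (by simp)).2
          rw [dsb_cons, hrt]; dsimp only
          rw [if_neg (by omega : ¬ q + m' < q)]
          have e1 : n1 - 1 + 1 = n1 := by omega
          have e2 : q + m' - q = m' := by omega
          rw [e2, if_neg (by omega : ¬ m' = 0), e1]
        | none =>
          rw [hrt] at hA
          by_cases hmo : Even m'
          · rw [if_neg (not_not_intro hmo)] at hA; exact absurd hA (by simp)
          · rw [if_pos hmo] at hA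
            simp only [Option.some.injEq, Prod.mk.injEq] at hA
            obtain ⟨rfl, rfl⟩ := hA
            have hm'pos : 0 < m' := Nat.pos_of_ne_zero (by rintro rfl; exact hmo Even.zero)
            rw [dsb_cons, hrt]; dsimp only
            have e2 : n1 - 1 + m' - (n1 - 1) = m' := by omega
            rw [if_pos ⟨by omega, by rw [e2]; exact hmo⟩]
            have e1 : n1 - 1 + 1 = n1 := by omega
            have e3 : n1 - 1 + m' - (n1 - 1) - 1 = m' - 1 := by omega
            rw [e3, e1]
            by_cases hone : m' = 1
            · rw [if_pos (by omega : m' - 1 = 0), if_pos hone]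
            · rw [if_neg (by omega : ¬ m' - 1 = 0), if_neg hone]
      · rw [mh_cons, if_neg heq] at hτeq
        subst hτeq
        rw [dsb_cons, hA]; dsimp only
        rw [if_neg (lt_irrefl m1), Nat.sub_self, if_pos rfl]
        have e1 : n1 - 1 + 1 = n1 := by omega
        rw [e1]

lemma main_ii {n : ℕ} {σ τ : List (ℕ × ℕ)} (hτ : IsBlockPartition n τ)
    (h : deltaStarB τ = some σ) : deltaB σ = some τ := by
  obtain ⟨hsort, hpos, -⟩ := hτ
  cases τ with
  | nil => simp [deltaStarB] at h
  | cons hd restτ =>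
    obtain ⟨N, M⟩ := hd
    simp only [List.map_cons, List.pairwise_cons] at hsort
    obtain ⟨hgt, hsrest⟩ := hsort
    rw [dsb_cons] at h
    cases hrt : removeLastOdd restτ with
    | some v =>
      obtain ⟨nt, rest'⟩ := v
      rw [hrt] at h; dsimp only at h
      by_cases hMnt : M < nt
      · rw [if_pos hMnt] at h; exact absurd h (by simp)
      rw [if_neg hMnt] at h
      simp only [Option.some.injEq] at h
      subst h
      obtain ⟨mx, hmx⟩ := rlo_mem hrt
      have hntN : nt < N := hgt nt (by simp; exact ⟨mx, hmx⟩)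
      have hB := rlo_insertPart hsrest hrt
      simp only [deltaB]
      rw [if_neg (by omega : ¬ N + 1 - 1 < nt)]
      have eN : N + 1 - 1 = N := by omega
      by_cases h0 : M - nt = 0
      · rw [if_pos h0, hB]
        simp only [Option.map_some, Option.some.injEq]
        have hM : M = nt := by omega
        cases restτ with
        | nil => simp [removeLastOdd] at hrt
        | cons hd2 t2 =>
          obtain ⟨b, k⟩ := hd2
          have hb : b < N := hgt b (by simp)
          rw [eN, mh_cons, if_neg (by omega : ¬ b = N), hM]
      · rw [if_neg h0]
        rw [ip_cons, if_neg (by omega : ¬ N < nt), if_neg (by omega : ¬ N = nt), hB]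
        simp only [Option.map_some, Option.some.injEq]
        rw [eN, mh_cons, if_pos rfl]
        have e2 : nt + (M - nt) = M := by omega
        rw [e2]
    | none =>
      rw [hrt] at h; dsimp only at h
      by_cases hc : N < M ∧ ¬ Even (M - N)
      swap
      · rw [if_neg hc] at h; exact absurd h (by simp)
      rw [if_pos hc] at h
      simp only [Option.some.injEq] at h
      subst h
      obtain ⟨hNM, hodd⟩ := hc
      have hall : ∀ b ∈ restτ, Even b.2 := (rlo_none_iff _).1 hrt
      simp only [deltaB]
      rw [if_neg (by omega : ¬ N + 1 - 1 < N)]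
      have eN : N + 1 - 1 = N := by omega
      by_cases h0 : M - N - 1 = 0
      · rw [if_pos h0]
        have hM : M = N + 1 := by omega
        cases restτ with
        | nil =>
          rw [show insertPart N ([] : List (ℕ × ℕ)) = some [(N, 1)] from rfl]
          simp only [Option.map_some, Option.some.injEq]
          rw [eN, mh_cons, if_pos rfl, hM]
        | cons hd2 t2 =>
          obtain ⟨b, k⟩ := hd2
          have hb : b < N := hgt b (by simp)
          rw [ip_cons, if_pos hb, if_pos hall]
          simp only [Option.map_some, Option.some.injEq]
          rw [eN, mh_cons, if_pos rfl, hM]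
      · rw [if_neg h0]
        have hme : Even (M - N - 1) := by
          rcases Nat.even_or_odd (M - N) with he | ho
          · exact absurd he hodd
          · obtain ⟨k, hk⟩ := ho; rw [hk]; simpa using even_two_mul k
        have hall2 : ∀ b ∈ (N, M - N - 1) :: restτ, Even b.2 := by
          intro b hb
          rcases List.mem_cons.1 hb with h1 | h2
          · subst h1; exact hme
          · exact hall b h2
        rw [ip_cons, if_neg (lt_irrefl N), if_pos rfl, if_pos hall2]
        simp only [Option.map_some, Option.some.injEq]
        have e2 : M - N - 1 + 1 = M - N := by omega
        rw [e2, eN, mh_cons, if_pos rfl]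
        have e3 : N + (M - N) = M := by omega
        rw [e3]

lemma main_iii {n : ℕ} {σ ρ : List (ℕ × ℕ)} (hσ : IsBlockPartition n σ)
    (h : deltaStarB σ = some ρ) : deltaStarB ρ = none := by
  obtain ⟨hsort, hpos, -⟩ := hσ
  cases σ with
  | nil => simp [deltaStarB] at h
  | cons hd rest =>
    obtain ⟨n1, m1⟩ := hd
    simp only [List.map_cons, List.pairwise_cons] at hsort
    obtain ⟨hgt, hsrest⟩ := hsort
    rw [dsb_cons] at h
    cases hrt : removeLastOdd rest with
    | some v =>
      obtain ⟨nt, rest'⟩ := v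
      rw [hrt] at h; dsimp only at h
      by_cases hlt : m1 < nt
      · rw [if_pos hlt] at h; exact absurd h (by simp)
      rw [if_neg hlt] at h
      simp only [Option.some.injEq] at h
      subst h
      obtain ⟨mx, hmx⟩ := rlo_mem hrt
      have hntn1 : nt < n1 := hgt nt (by simp; exact ⟨mx, hmx⟩)
      by_cases h0 : m1 - nt = 0
      · rw [if_pos h0, dsb_cons]
        cases hrt2 : removeLastOdd rest' with
        | some w =>
          obtain ⟨q, y⟩ := w
          dsimp only
          rw [if_pos (rlo_rlo hsrest hrt hrt2)]
        | none =>
          dsimp only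
          rw [if_neg (by omega : ¬ (n1 + 1 < nt ∧ ¬ Even (nt - (n1 + 1))))]
      · rw [if_neg h0, dsb_cons, rlo_cons]
        cases hrt2 : removeLastOdd rest' with
        | some w =>
          obtain ⟨q, y⟩ := w
          dsimp only
          have hq : nt < q := rlo_rlo hsrest hrt hrt2
          rw [if_pos hq]
        | none =>
          dsimp only
          by_cases he : Even (m1 - nt)
          · rw [if_neg (not_not_intro he)]; dsimp only
            rw [if_neg (by omega : ¬ (n1 + 1 < nt ∧ ¬ Even (nt - (n1 + 1))))]
          · rw [if_pos he]; dsimp only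
            rw [if_pos hntn1]
    | none =>
      rw [hrt] at h; dsimp only at h
      by_cases hc : n1 < m1 ∧ ¬ Even (m1 - n1)
      swap
      · rw [if_neg hc] at h; exact absurd h (by simp)
      rw [if_pos hc] at h
      simp only [Option.some.injEq] at h
      subst h
      obtain ⟨hNM, hodd⟩ := hc
      have hall : ∀ b ∈ rest, Even b.2 := (rlo_none_iff _).1 hrt
      have hme : Even (m1 - n1 - 1) := by
        rcases Nat.even_or_odd (m1 - n1) with he | ho
        · exact absurd he hodd
        · obtain ⟨k, hk⟩ := ho; rw [hk]; simpa using even_two_mul k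
      have hXnone : removeLastOdd
          (if m1 - n1 - 1 = 0 then rest else (n1, m1 - n1 - 1) :: rest) = none := by
        apply (rlo_none_iff _).2
        intro b hb
        split_ifs at hb with h0
        · exact hall b hb
        · rcases List.mem_cons.1 hb with h1 | h2
          · subst h1; exact hme
          · exact hall b h2
      rw [dsb_cons, hXnone]; dsimp only
      rw [if_neg (by omega : ¬ (n1 + 1 < n1 ∧ ¬ Even (n1 - (n1 + 1))))]

/-- Adjointness of the bosonic `δ` and `δ*`: for partitions `σ, τ` of `n`,
(i) `δσ = τ ≠ 0` implies `δ*τ = σ`, (ii) `δ*τ = σ ≠ 0` implies `δσ = τ`;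
moreover `δ* ∘ δ* = 0`. -/
theorem deltaB_deltaStarB_adjoint_and_sq_zero (n : ℕ) :
    (∀ σ τ : List (ℕ × ℕ), IsBlockPartition n σ → IsBlockPartition n τ →
      (deltaB σ = some τ → deltaStarB τ = some σ) ∧
      (deltaStarB τ = some σ → deltaB σ = some τ)) ∧
    (∀ σ ρ : List (ℕ × ℕ), IsBlockPartition n σ →
      deltaStarB σ = some ρ → deltaStarB ρ = none) := by
  refine ⟨fun σ τ hσ hτ => ⟨main_i hσ, main_ii hτ⟩, fun σ ρ hσ h => main_iii hσ h⟩
end
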